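/- Let α > 2 and ω > 0. Then E*(ω) ≤ inf{ (ω²/2) I(x) + U(x) : K_ω(x) > 0 }; in fact for every configuration x with K_ω(x) > 0 one has the strict inequality (ω²/2) I(x) + U(x) > E*(ω). (Proof by scaling: there exists 0 < λ* < 1 with K_ω(λ* x) = 0, and E_ω(x) > E_ω(λ* x) ≥ E*(ω).) -/
import Mathlib


/- STATEMENT 12: E*(ω) ≤ inf{E_ω(x) : K_ω(x) > 0}; in fact E_ω(x) > E*(ω) strictly
whenever K_ω(x) > 0, for α > 2. -/

namespace NBodyPaper

open Real

noncomputable section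

abbrev E3 := EuclideanSpace ℝ (Fin 3)

variable {N : ℕ}

/-- The α-homogeneous potential `U(x) = -∑_{i<j} m_i m_j / |x_i - x_j|^α`. -/
def pot (α : ℝ) (m : Fin N → ℝ) (q : Fin N → E3) : ℝ :=
  -∑ i : Fin N, ∑ j ∈ Finset.univ.filter (fun j => i < j), m i * m j / ‖q i - q j‖ ^ α

/-- Moment of inertia `I(x) = ∑ m_i |x_i|²`. -/
def inertia (m : Fin N → ℝ) (q : Fin N → E3) : ℝ := ∑ i, m i * ‖q i‖ ^ 2

/-- Collision-free configuration. -/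
def OffDiag (q : Fin N → E3) : Prop := ∀ i j, i ≠ j → q i ≠ q j

/-- Center of mass at the origin. -/
def comZero (m : Fin N → ℝ) (q : Fin N → E3) : Prop := ∑ i, m i • q i = 0

/-- The threshold function `K_ω(x) = ω² I(x) + α U(x)`. -/
def Kfun (α : ℝ) (m : Fin N → ℝ) (ω : ℝ) (q : Fin N → E3) : ℝ :=
  ω ^ 2 * inertia m q + α * pot α m q

/-- `E_ω(x) = (ω²/2) I(x) + U(x)`. -/
def Eomega (α : ℝ) (m : Fin N → ℝ) (ω : ℝ) (q : Fin N → E3) : ℝ :=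
  ω ^ 2 / 2 * inertia m q + pot α m q

/-- The excited energy `E*(ω) = inf { E_ω(x) : K_ω(x) = 0 }`, the infimum taken over
collision-free configurations with center of mass zero. -/
def Estar (α : ℝ) (m : Fin N → ℝ) (ω : ℝ) : ℝ :=
  sInf {e : ℝ | ∃ q : Fin N → E3, OffDiag q ∧ comZero m q ∧ Kfun α m ω q = 0 ∧ e = Eomega α m ω q}

lemma aux_inertia_nonneg {m : Fin N → ℝ} (hm : ∀ i, 0 ≤ m i) (q : Fin N → E3) :
    0 ≤ inertia m q :=
  Finset.sum_nonneg fun i _ => mul_nonneg (hm i) (sq_nonneg _)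

lemma aux_pot_nonpos {α : ℝ} {m : Fin N → ℝ} (hm : ∀ i, 0 ≤ m i) (q : Fin N → E3) :
    pot α m q ≤ 0 := by
  unfold pot
  simp only [neg_nonpos]
  exact Finset.sum_nonneg fun i _ => Finset.sum_nonneg fun j _ =>
    div_nonneg (mul_nonneg (hm i) (hm j)) (Real.rpow_nonneg (norm_nonneg _) _)

lemma aux_pot_neg {α : ℝ} {m : Fin N → ℝ} (hm : ∀ i, 0 < m i) {q : Fin N → E3}
    (hq : OffDiag q) {i j : Fin N} (hij : i < j) : pot α m q < 0 := by
  unfold pot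
  rw [neg_lt_zero]
  refine Finset.sum_pos' (fun a _ => Finset.sum_nonneg fun b _ =>
    div_nonneg (mul_nonneg (hm a).le (hm b).le) (Real.rpow_nonneg (norm_nonneg _) _))
    ⟨i, Finset.mem_univ i, ?_⟩
  refine Finset.sum_pos' (fun b _ => div_nonneg (mul_nonneg (hm i).le (hm b).le)
    (Real.rpow_nonneg (norm_nonneg _) _)) ⟨j, Finset.mem_filter.mpr ⟨Finset.mem_univ j, hij⟩, ?_⟩
  exact div_pos (mul_pos (hm i) (hm j))
    (Real.rpow_pos_of_pos (norm_pos_iff.mpr (sub_ne_zero.mpr (hq i j hij.ne))) α)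

lemma aux_inertia_smul (m : Fin N → ℝ) (l : ℝ) (q : Fin N → E3) :
    inertia m (fun i => l • q i) = l ^ 2 * inertia m q := by
  unfold inertia
  rw [Finset.mul_sum]
  refine Finset.sum_congr rfl fun i _ => ?_
  rw [norm_smul, Real.norm_eq_abs, mul_pow, sq_abs]
  ring

lemma aux_pot_smul {α : ℝ} (m : Fin N → ℝ) {l : ℝ} (hl : 0 ≤ l) (q : Fin N → E3) :
    pot α m (fun i => l • q i) = (l ^ α)⁻¹ * pot α m q := by
  unfold pot
  rw [mul_neg, neg_inj, Finset.mul_sum]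
  refine Finset.sum_congr rfl fun i _ => ?_
  rw [Finset.mul_sum]
  refine Finset.sum_congr rfl fun j _ => ?_
  rw [← smul_sub, norm_smul, Real.norm_eq_abs, abs_of_nonneg hl,
    Real.mul_rpow hl (norm_nonneg _), div_eq_mul_inv, div_eq_mul_inv, mul_inv]
  ring

lemma aux_offdiag_smul {l : ℝ} (hl : l ≠ 0) {q : Fin N → E3} (hq : OffDiag q) :
    OffDiag (fun i => l • q i) := fun i j hij h =>
  hq i j hij (smul_right_injective E3 hl h)

lemma aux_comzero_smul {m : Fin N → ℝ} (l : ℝ) {q : Fin N → E3} (hq : comZero m q) :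
    comZero m (fun i => l • q i) := by
  unfold comZero at *
  have : ∑ i, m i • l • q i = l • ∑ i, m i • q i := by
    rw [Finset.smul_sum]
    exact Finset.sum_congr rfl fun i _ => smul_comm _ _ _
  rw [this, hq, smul_zero]

/-- Every value in the `K = 0` constraint set is nonnegative (for `α > 2`). -/
lemma aux_S_nonneg {α ω : ℝ} (hα : 2 < α) (hω : 0 < ω) {m : Fin N → ℝ}
    (hm : ∀ i, 0 < m i) {e : ℝ}
    (he : e ∈ {e : ℝ | ∃ q : Fin N → E3,
      OffDiag q ∧ comZero m q ∧ Kfun α m ω q = 0 ∧ e = Eomega α m ω q}) : 0 ≤ e := by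
  obtain ⟨q, -, -, hK, hE⟩ := he
  unfold Kfun at hK
  unfold Eomega at hE
  have hI : 0 ≤ inertia m q := aux_inertia_nonneg (fun i => (hm i).le) q
  nlinarith [sq_nonneg ω, mul_nonneg (sq_nonneg ω) hI]

lemma aux_bddBelow {α ω : ℝ} (hα : 2 < α) (hω : 0 < ω) {m : Fin N → ℝ}
    (hm : ∀ i, 0 < m i) :
    BddBelow {e : ℝ | ∃ q : Fin N → E3,
      OffDiag q ∧ comZero m q ∧ Kfun α m ω q = 0 ∧ e = Eomega α m ω q} :=
  ⟨0, fun _ he => aux_S_nonneg hα hω hm he⟩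

/-- Key lemma: strict inequality for configurations above the constraint set. -/
lemma aux_key {N : ℕ} (α ω : ℝ) (hα : 2 < α) (hω : 0 < ω)
    (m : Fin N → ℝ) (hm : ∀ i, 0 < m i) (x : Fin N → E3)
    (hod : OffDiag x) (hcom : comZero m x) (hK : 0 < Kfun α m ω x) :
    Estar α m ω < Eomega α m ω x := by
  have hα0 : 0 < α := by linarith
  have hUle : pot α m x ≤ 0 := aux_pot_nonpos (fun i => (hm i).le) x
  unfold Kfun at hK
  have hω2 : (0:ℝ) < ω ^ 2 := by positivity
  have hI : 0 < inertia m x := by nlinarith [mul_nonpos_of_nonneg_of_nonpos hα0.le hUle]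
  -- there exists i with x i ≠ 0
  have hi : ∃ i, x i ≠ 0 := by
    by_contra h
    push_neg at h
    simp [inertia, h] at hI
  obtain ⟨i, hxi⟩ := hi
  -- there exists j ≠ i
  have hj : ∃ j, j ≠ i := by
    by_contra h
    push_neg at h
    have := hcom
    unfold comZero at this
    rw [Finset.sum_eq_single i (fun b _ hb => absurd (h b) hb) (fun h' => absurd (Finset.mem_univ i) h')] at this
    exact hxi (by simpa [smul_eq_zero, (hm i).ne'] using this)
  obtain ⟨j, hji⟩ := hj
  have hU : pot α m x < 0 := by
    rcases lt_or_gt_of_ne hji with h | h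
    · exact aux_pot_neg hm hod h
    · exact aux_pot_neg hm hod h
  set Ux := pot α m x with hUxdef
  set Ix := inertia m x with hIxdef
  have hc1 : α * (-Ux) < ω ^ 2 * Ix := by linarith
  have hc0 : 0 < α * (-Ux) := mul_pos hα0 (neg_pos.mpr hU)
  set c : ℝ := α * (-Ux) / (ω ^ 2 * Ix) with hcdef
  have hIx0 : 0 < ω ^ 2 * Ix := by positivity
  have hcpos : 0 < c := div_pos hc0 hIx0
  have hclt : c < 1 := (div_lt_one hIx0).mpr hc1
  set l : ℝ := c ^ ((α + 2)⁻¹) with hldef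
  have hl0 : 0 < l := Real.rpow_pos_of_pos hcpos _
  have hl1 : l < 1 := Real.rpow_lt_one hcpos.le hclt (by positivity)
  have hα2 : α + 2 ≠ 0 := by linarith
  have hlpow : l ^ (α + 2) = c := by
    rw [hldef, ← Real.rpow_mul hcpos.le, inv_mul_cancel₀ hα2, Real.rpow_one]
  have hmix : l ^ (2:ℕ) * l ^ α = c := by
    rw [← Real.rpow_natCast l 2, ← Real.rpow_add hl0,
      show ((2:ℕ):ℝ) + α = α + 2 by push_cast; ring, hlpow]
  have hlα : 0 < l ^ α := Real.rpow_pos_of_pos hl0 α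
  set y : Fin N → E3 := fun i => l • x i with hydef
  have hIy : inertia m y = l ^ 2 * Ix := aux_inertia_smul m l x
  have hUy : pot α m y = (l ^ α)⁻¹ * Ux := aux_pot_smul m hl0.le x
  have hcmul : ω ^ 2 * Ix * c = α * (-Ux) := by
    rw [hcdef, mul_div_cancel₀ _ hIx0.ne']
  have hKy : Kfun α m ω y = 0 := by
    unfold Kfun
    rw [hIy, hUy]
    have h1 : ω ^ 2 * (l ^ 2 * Ix) * l ^ α = α * (-Ux) := by
      rw [show ω ^ 2 * (l ^ 2 * Ix) * l ^ α = ω ^ 2 * Ix * (l ^ (2:ℕ) * l ^ α) by ring, hmix, hcmul]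
    field_simp
    linarith [h1]
  have hl2 : l ^ 2 < 1 := by nlinarith
  have hinv : 1 < (l ^ α)⁻¹ := (one_lt_inv₀ hlα).mpr (Real.rpow_lt_one hl0.le hl1 hα0)
  have hEy : Eomega α m ω y < Eomega α m ω x := by
    unfold Eomega
    rw [hIy, hUy]
    have t1 : ω ^ 2 / 2 * (l ^ 2 * Ix) < ω ^ 2 / 2 * Ix := by nlinarith
    have t2 : (l ^ α)⁻¹ * Ux < Ux := by nlinarith
    linarith
  refine lt_of_le_of_lt (csInf_le (aux_bddBelow hα hω hm) ?_) hEy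
  exact ⟨y, aux_offdiag_smul hl0.ne' hod, aux_comzero_smul l hcom, hKy, rfl⟩

/-- **Above the constraint set the energy exceeds the excited energy**: for `α > 2`,
`ω > 0`, every configuration with `K_ω(x) > 0` satisfies `E_ω(x) > E*(ω)`; in particular
`E*(ω) ≤ inf { E_ω(x) : K_ω(x) > 0 }`. -/
theorem Estar_le_of_Kfun_pos {N : ℕ} (α ω : ℝ) (hα : 2 < α) (hω : 0 < ω)
    (m : Fin N → ℝ) (hm : ∀ i, 0 < m i) :
    (∀ x : Fin N → E3, OffDiag x → comZero m x → 0 < Kfun α m ω x →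
      Estar α m ω < Eomega α m ω x) ∧
    Estar α m ω ≤ sInf {e : ℝ | ∃ x : Fin N → E3,
      OffDiag x ∧ comZero m x ∧ 0 < Kfun α m ω x ∧ e = Eomega α m ω x} := by
  have hα0 : 0 < α := by linarith
  refine ⟨fun x h1 h2 h3 => aux_key α ω hα hω m hm x h1 h2 h3, ?_⟩
  by_cases hT : {e : ℝ | ∃ x : Fin N → E3,
      OffDiag x ∧ comZero m x ∧ 0 < Kfun α m ω x ∧ e = Eomega α m ω x}.Nonempty
  · refine le_csInf hT ?_
    rintro e ⟨x, h1, h2, h3, rfl⟩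
    exact (aux_key α ω hα hω m hm x h1 h2 h3).le
  · rw [Set.not_nonempty_iff_eq_empty] at hT
    rw [hT, Real.sInf_empty]
    by_cases hS : {e : ℝ | ∃ q : Fin N → E3,
        OffDiag q ∧ comZero m q ∧ Kfun α m ω q = 0 ∧ e = Eomega α m ω q}.Nonempty
    · obtain ⟨e, q, h1, h2, h3, h4⟩ := hS
      by_cases hIq : inertia m q = 0
      · -- all points are at the origin; e = 0
        have hq0 : ∀ i, q i = 0 := by
          intro i
          have := (Finset.sum_eq_zero_iff_of_nonneg
            (fun i _ => mul_nonneg (hm i).le (sq_nonneg ‖q i‖))).mp hIq i (Finset.mem_univ i)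
          have h2 : ‖q i‖ ^ 2 = 0 := by
            rcases mul_eq_zero.mp this with h | h
            · exact absurd h (hm i).ne'
            · exact h
          simpa [pow_eq_zero_iff] using h2
        have hpot : pot α m q = 0 := by
          simp [pot, hq0, Real.zero_rpow hα0.ne']
        have he0 : e = 0 := by
          rw [h4]; unfold Eomega; rw [hIq, hpot]; ring
        rw [← he0]
        exact csInf_le (aux_bddBelow hα hω hm) ⟨q, h1, h2, h3, h4⟩
      · -- scale q up by 2 to get a point with K > 0, contradicting hT
        exfalso
        have hIq' : 0 < inertia m q :=
          lt_of_le_of_ne (aux_inertia_nonneg (fun i => (hm i).le) q) (Ne.symm hIq)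
        unfold Kfun at h3
        set y : Fin N → E3 := fun i => (2:ℝ) • q i with hydef
        have h2α : (1:ℝ) < (2:ℝ) ^ α :=
          Real.one_lt_rpow_iff_of_pos (by norm_num) |>.mpr (Or.inl ⟨by norm_num, hα0⟩)
        have h2α0 : (0:ℝ) < (2:ℝ) ^ α := by linarith
        have hKy : 0 < Kfun α m ω y := by
          unfold Kfun
          rw [aux_inertia_smul, aux_pot_smul m (by norm_num : (0:ℝ) ≤ 2)]
          have hinv1 : ((2:ℝ) ^ α)⁻¹ < 1 := inv_lt_one_of_one_lt₀ h2α
          have hinv0 : (0:ℝ) < ((2:ℝ) ^ α)⁻¹ := by positivity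
          -- ω² * 4 I + α * (2^α)⁻¹ U, with α U = -ω² I
          have hAU : α * pot α m q = -(ω ^ 2 * inertia m q) := by linarith
          have hsq : ω ^ 2 > 0 := by positivity
          nlinarith [mul_pos hsq hIq']
        have : Eomega α m ω y ∈ {e : ℝ | ∃ x : Fin N → E3,
            OffDiag x ∧ comZero m x ∧ 0 < Kfun α m ω x ∧ e = Eomega α m ω x} :=
          ⟨y, aux_offdiag_smul (by norm_num) h1, aux_comzero_smul 2 h2, hKy, rfl⟩
        rw [hT] at this
        exact this
    · rw [Set.not_nonempty_iff_eq_empty] at hS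
      unfold Estar
      rw [hS, Real.sInf_empty]


end
end NBodyPaper
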